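/- Let Y = aX + b where X ~ N(ν, ζ) and a > 0, b ∈ ℝ, with an additional independent noise: given X, observations y₁,…,y_M are i.i.d. N(aX + b, a²ς²). Then the marginal log-density of (y₁,…,y_M) equals −(1/2)[M log 2π + (M−1)log(ς²a²) + log(a²Mζ + ς²a²) + ς⁻²a⁻²(s − M⁻¹g²) + (ζ + ς²M⁻¹)⁻¹(g̃ − ν)²], where g = Σₘ yₘ, s = Σₘ yₘ², and g̃ = a⁻¹(M⁻¹g − b). -/

import Mathlib

open ProbabilityTheory Real MeasureTheory

set_option maxHeartbeats 1000000

/-- Marginal log-density in the gain–offset model with Gaussian latent value: if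
`X ~ N(ν, ζ)` and, given `X`, the observations `y₁, …, y_M` are i.i.d. `N(aX + b, a²ς²)`,
then the marginal log-density of `(y₁, …, y_M)` equals
`−(1/2)[M log 2π + (M−1) log(ς²a²) + log(a² M ζ + ς² a²) + ς⁻²a⁻²(s − M⁻¹g²)
+ (ζ + ς²M⁻¹)⁻¹ (g̃ − ν)²]`, where `g = Σₘ yₘ`, `s = Σₘ yₘ²`, `g̃ = a⁻¹(M⁻¹g − b)`. -/
theorem marginal_log_density_gain_offset (M : ℕ) (hM : 1 ≤ M)
    (ν ζ a b ς : ℝ) (hζ : 0 < ζ) (ha : 0 < a) (hς : 0 < ς)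
    (y : Fin M → ℝ) (g s gt : ℝ)
    (hg : g = ∑ m, y m) (hs : s = ∑ m, (y m) ^ 2)
    (hgt : gt = a⁻¹ * ((M : ℝ)⁻¹ * g - b)) :
    Real.log (∫ x : ℝ,
        (∏ m, gaussianPDFReal (a * x + b) ((a ^ 2 * ς ^ 2).toNNReal) (y m))
          * gaussianPDFReal ν ζ.toNNReal x)
      = -(1 / 2) * ((M : ℝ) * Real.log (2 * Real.pi)
          + ((M : ℝ) - 1) * Real.log (ς ^ 2 * a ^ 2)
          + Real.log (a ^ 2 * (M : ℝ) * ζ + ς ^ 2 * a ^ 2)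
          + (ς ^ 2)⁻¹ * (a ^ 2)⁻¹ * (s - (M : ℝ)⁻¹ * g ^ 2)
          + (ζ + ς ^ 2 * (M : ℝ)⁻¹)⁻¹ * (gt - ν) ^ 2) := by
  have hπ := Real.pi_pos
  have hM0 : (0 : ℝ) < (M : ℝ) := by exact_mod_cast Nat.lt_of_lt_of_le Nat.zero_lt_one hM
  set v : ℝ := a ^ 2 * ς ^ 2 with hv_def
  have hv : 0 < v := by positivity
  have hvc : (((a ^ 2 * ς ^ 2).toNNReal) : ℝ) = v := Real.coe_toNNReal _ hv.le
  have hζc : ((ζ.toNNReal : ℝ)) = ζ := Real.coe_toNNReal _ hζ.le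
  set A : ℝ := (M : ℝ) * a ^ 2 / (2 * v) + 1 / (2 * ζ) with hA_def
  have hA : 0 < A := by positivity
  set B : ℝ := a * (g - (M : ℝ) * b) / (2 * v) + ν / (2 * ζ) with hB_def
  set D : ℝ := (s - 2 * b * g + (M : ℝ) * b ^ 2) / (2 * v) + ν ^ 2 / (2 * ζ) with hD_def
  set P : ℝ := ((Real.sqrt (2 * π * v))⁻¹) ^ M * (Real.sqrt (2 * π * ζ))⁻¹ with hP_def
  have hP : 0 < P := by positivity
  set Q : ℝ := (1 / 2) * ((ς ^ 2)⁻¹ * (a ^ 2)⁻¹ * (s - (M : ℝ)⁻¹ * g ^ 2)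
      + (ζ + ς ^ 2 * (M : ℝ)⁻¹)⁻¹ * (gt - ν) ^ 2) with hQ_def
  have hMne : (M : ℝ) ≠ 0 := hM0.ne'
  have hζς : (0:ℝ) < ζ + ς ^ 2 * (M : ℝ)⁻¹ := by positivity
  -- key quadratic identity
  have hq : B ^ 2 = (D - Q) * A := by
    rw [hB_def, hD_def, hQ_def, hA_def, hgt]
    field_simp
    ring
  have hDBQ : D - B ^ 2 / A = Q := by
    rw [hq, mul_div_assoc, div_self hA.ne', mul_one]; ring
  -- pointwise rewriting of the integrand
  have hpoint : ∀ x : ℝ,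
      (∏ m, gaussianPDFReal (a * x + b) ((a ^ 2 * ς ^ 2).toNNReal) (y m))
        * gaussianPDFReal ν ζ.toNNReal x
      = (P * Real.exp (-(D - B ^ 2 / A))) * Real.exp (-A * (x - B / A) ^ 2) := by
    intro x
    simp only [gaussianPDFReal, hvc, hζc]
    rw [Finset.prod_mul_distrib, Finset.prod_const, Finset.card_univ, Fintype.card_fin]
    have hsum2 : ∑ m, -(y m - (a * x + b)) ^ 2 / (2 * v)
        = -(s - 2 * (a * x + b) * g + (M : ℝ) * (a * x + b) ^ 2) / (2 * v) := by
      rw [← Finset.sum_div]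
      congr 1
      have h1 : ∀ m : Fin M, -(y m - (a * x + b)) ^ 2
          = -(y m ^ 2) + (2 * (a * x + b)) * y m + (-(a * x + b) ^ 2) := by
        intro m; ring
      simp_rw [h1]
      rw [Finset.sum_add_distrib, Finset.sum_add_distrib, ← Finset.mul_sum,
        Finset.sum_neg_distrib, Finset.sum_const, Finset.card_univ, Fintype.card_fin,
        ← hg, ← hs]
      ring
    have hexp : (∑ m, -(y m - (a * x + b)) ^ 2 / (2 * v)) + -(x - ν) ^ 2 / (2 * ζ)
        = -(D - B ^ 2 / A) + -A * (x - B / A) ^ 2 := by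
      have hrhs : -(D - B ^ 2 / A) + -A * (x - B / A) ^ 2 = -D + 2 * B * x - A * x ^ 2 := by
        field_simp
        ring
      rw [hsum2, hrhs, hD_def, hB_def, hA_def]
      field_simp
      ring
    calc ((Real.sqrt (2 * π * v))⁻¹ ^ M * ∏ m, Real.exp (-(y m - (a * x + b)) ^ 2 / (2 * v)))
          * ((Real.sqrt (2 * π * ζ))⁻¹ * Real.exp (-(x - ν) ^ 2 / (2 * ζ)))
        = P * (Real.exp (∑ m, -(y m - (a * x + b)) ^ 2 / (2 * v))
            * Real.exp (-(x - ν) ^ 2 / (2 * ζ))) := by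
          rw [← Real.exp_sum, hP_def]; ring
      _ = P * Real.exp ((∑ m, -(y m - (a * x + b)) ^ 2 / (2 * v)) + -(x - ν) ^ 2 / (2 * ζ)) := by
          rw [Real.exp_add]
      _ = (P * Real.exp (-(D - B ^ 2 / A))) * Real.exp (-A * (x - B / A) ^ 2) := by
          rw [hexp, Real.exp_add]; ring
  -- compute the integral
  have hint : (∫ x : ℝ,
      (∏ m, gaussianPDFReal (a * x + b) ((a ^ 2 * ς ^ 2).toNNReal) (y m))
        * gaussianPDFReal ν ζ.toNNReal x)
      = (P * Real.exp (-(D - B ^ 2 / A))) * Real.sqrt (π / A) := by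
    simp_rw [hpoint]
    rw [MeasureTheory.integral_const_mul]
    congr 1
    have := MeasureTheory.integral_sub_right_eq_self
      (μ := MeasureTheory.volume) (fun x : ℝ => Real.exp (-A * x ^ 2)) (B / A)
    rw [this, integral_gaussian]
  rw [hint, Real.log_mul (by positivity) (by positivity),
    Real.log_mul hP.ne' (Real.exp_ne_zero _), Real.log_exp,
    Real.log_sqrt (by positivity), hDBQ]
  -- expand the logarithms
  have hlogP : Real.log P
      = -(M : ℝ) * (Real.log 2 + Real.log π + Real.log v) / 2
        - (Real.log 2 + Real.log π + Real.log ζ) / 2 := by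
    rw [hP_def, Real.log_mul (by positivity) (by positivity), Real.log_pow,
      Real.log_inv, Real.log_inv, Real.log_sqrt (by positivity),
      Real.log_sqrt (by positivity), Real.log_mul (by positivity) hv.ne',
      Real.log_mul (by positivity) hζ.ne', Real.log_mul two_ne_zero hπ.ne']
    ring
  have hNum : (0:ℝ) < (M : ℝ) * a ^ 2 * ζ + v := by positivity
  have hA_eq : A = ((M : ℝ) * a ^ 2 * ζ + v) / (2 * v * ζ) := by
    rw [hA_def]; field_simp
  have hlogA : Real.log A
      = Real.log ((M : ℝ) * a ^ 2 * ζ + v) - (Real.log 2 + Real.log v + Real.log ζ) := by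
    rw [hA_eq, Real.log_div hNum.ne' (by positivity),
      Real.log_mul (by positivity) hζ.ne', Real.log_mul two_ne_zero hv.ne']
  have hlogπA : Real.log (π / A) = Real.log π - Real.log A :=
    Real.log_div hπ.ne' hA.ne'
  have h2π : Real.log (2 * π) = Real.log 2 + Real.log π :=
    Real.log_mul two_ne_zero hπ.ne'
  have hv1 : ς ^ 2 * a ^ 2 = v := by rw [hv_def]; ring
  have hv2 : a ^ 2 * (M : ℝ) * ζ + ς ^ 2 * a ^ 2 = (M : ℝ) * a ^ 2 * ζ + v := by
    rw [hv_def]; ring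
  rw [hv2, hv1, hlogP, hlogπA, hlogA, h2π, hQ_def]
  ring
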